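/- arXiv:1509.07008 — 3 statements merged into one kernel-verified Lean document; each statement's English description precedes it below -/
import Mathlib

section
/- Let z₀ ∈ ℂ, m ≥ 1 an integer, and let F, G : ℂ → ℂ be analytic on a neighbourhood of z₀ such that all odd-order derivatives of orders 1, 3, …, 2m−1 of F and of G vanish at z₀. Then the (2m−1)-st derivative of the product F·G also vanishes at z₀, and consequently the function z ↦ F(z)·G(z)·(z−z₀)^{−2m} has zero residue at z₀: for every r > 0 such that F and G are analytic on the closed disc of radius r around z₀, one has ∮_{|z−z₀|=r} F(z)·G(z)·(z−z₀)^{−2m} dz = 0. (In particular, if ψ and φ are meromorphic near z₀ and both quasi-invariant at z₀ with multiplicity m, then Res_{z=z₀}(ψ·φ) = 0.) -/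
open Finset in
private lemma aux_analyticOnNhd_iteratedDeriv {f : ℂ → ℂ} {s : Set ℂ}
    (hf : AnalyticOnNhd ℂ f s) (n : ℕ) : AnalyticOnNhd ℂ (iteratedDeriv n f) s := by
  induction n with
  | zero => simpa using hf
  | succ n ih => rw [iteratedDeriv_succ]; exact ih.deriv

open Finset in
private lemma aux_leibniz {f g : ℂ → ℂ} {s : Set ℂ} (hs : IsOpen s)
    (hf : AnalyticOnNhd ℂ f s) (hg : AnalyticOnNhd ℂ g s) (n : ℕ) :
    ∀ x ∈ s, iteratedDeriv n (fun z => f z * g z) x =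
      ∑ k ∈ Finset.range (n + 1),
        (n.choose k : ℂ) * (iteratedDeriv k f x * iteratedDeriv (n - k) g x) := by
  induction n with
  | zero => intro x hx; simp
  | succ n ih =>
    intro x hx
    have hdf : ∀ k (y : ℂ), y ∈ s → DifferentiableAt ℂ (iteratedDeriv k f) y :=
      fun k y hy => ((aux_analyticOnNhd_iteratedDeriv hf k) y hy).differentiableAt
    have hdg : ∀ k (y : ℂ), y ∈ s → DifferentiableAt ℂ (iteratedDeriv k g) y :=
      fun k y hy => ((aux_analyticOnNhd_iteratedDeriv hg k) y hy).differentiableAt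
    have hev : iteratedDeriv n (fun z => f z * g z) =ᶠ[nhds x]
        fun y => ∑ k ∈ Finset.range (n + 1),
          (n.choose k : ℂ) * (iteratedDeriv k f y * iteratedDeriv (n - k) g y) := by
      filter_upwards [hs.mem_nhds hx] with y hy using ih y hy
    rw [iteratedDeriv_succ, hev.deriv_eq, deriv_fun_sum (fun k _ =>
      (differentiableAt_const _).fun_mul ((hdf k x hx).fun_mul (hdg (n - k) x hx)))]
    have hterm : ∀ k ∈ Finset.range (n + 1),
        deriv (fun y => (n.choose k : ℂ) *
            (iteratedDeriv k f y * iteratedDeriv (n - k) g y)) x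
          = (n.choose k : ℂ) * (iteratedDeriv (k + 1) f x * iteratedDeriv (n - k) g x)
            + (n.choose k : ℂ) * (iteratedDeriv k f x * iteratedDeriv (n - k + 1) g x) := by
      intro k _
      rw [deriv_const_mul _ ((hdf k x hx).fun_mul (hdg (n - k) x hx)),
        deriv_fun_mul (hdf k x hx) (hdg (n - k) x hx), ← iteratedDeriv_succ, ← iteratedDeriv_succ]
      ring
    rw [Finset.sum_congr rfl hterm, Finset.sum_add_distrib]
    rw [show n + 1 + 1 = n + 2 from rfl,
      Finset.sum_choose_succ_mul (fun i j => iteratedDeriv i f x * iteratedDeriv j g x) n]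
    have h1 : ∀ k ∈ Finset.range (n + 1), n + 1 - k = n - k + 1 := fun k hk => by
      have := Finset.mem_range.mp hk; omega
    rw [add_comm]
    congr 1
    exact Finset.sum_congr rfl fun k hk => by rw [h1 k hk]

/-- If `F`, `G` are analytic near `z₀` with all odd-order derivatives of
orders `1, 3, …, 2m−1` vanishing at `z₀`, then the `(2m−1)`-st derivative of `F·G`
vanishes at `z₀`, and the circle integral of `F(z)·G(z)·(z−z₀)^{−2m}` over any circle
`|z−z₀| = r` on whose closed disc `F` and `G` are analytic is zero. -/
theorem stmt_0 (z₀ : ℂ) (m : ℕ) (hm : 1 ≤ m) (F G : ℂ → ℂ)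
    (hF : AnalyticAt ℂ F z₀) (hG : AnalyticAt ℂ G z₀)
    (hFodd : ∀ j : ℕ, 1 ≤ j → j ≤ m → iteratedDeriv (2 * j - 1) F z₀ = 0)
    (hGodd : ∀ j : ℕ, 1 ≤ j → j ≤ m → iteratedDeriv (2 * j - 1) G z₀ = 0) :
    iteratedDeriv (2 * m - 1) (fun z => F z * G z) z₀ = 0 ∧
      ∀ r : ℝ, 0 < r →
        (∀ z ∈ Metric.closedBall z₀ r, AnalyticAt ℂ F z) →
        (∀ z ∈ Metric.closedBall z₀ r, AnalyticAt ℂ G z) →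
        (∮ z in C(z₀, r), F z * G z / (z - z₀) ^ (2 * m)) = 0 := by
  have hpart1 : iteratedDeriv (2 * m - 1) (fun z => F z * G z) z₀ = 0 := by
    obtain ⟨s, hsub, hso, hz₀⟩ :=
      eventually_nhds_iff.mp (hF.eventually_analyticAt.and hG.eventually_analyticAt)
    rw [aux_leibniz hso (fun y hy => (hsub y hy).1) (fun y hy => (hsub y hy).2)
      (2 * m - 1) z₀ hz₀]
    refine Finset.sum_eq_zero fun k hk => ?_
    have hk' : k ≤ 2 * m - 1 := by
      have := Finset.mem_range.mp hk; omega
    rcases Nat.even_or_odd k with ⟨c, hc⟩ | ⟨c, hc⟩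
    · have hcm : c < m := by omega
      have : 2 * m - 1 - k = 2 * (m - c) - 1 := by omega
      rw [this, hGodd (m - c) (by omega) (by omega), mul_zero, mul_zero]
    · have : k = 2 * (c + 1) - 1 := by omega
      rw [this, hFodd (c + 1) (by omega) (by omega), zero_mul, mul_zero]
  refine ⟨hpart1, fun r hr hFr hGr => ?_⟩
  lift r to NNReal using hr.le with R hR
  have hr' : 0 < R := by exact_mod_cast hr
  set H : ℂ → ℂ := fun z => F z * G z with hH
  have hHd : DifferentiableOn ℂ H (Metric.closedBall z₀ (R : ℝ)) := fun z hz =>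
    (((hFr z hz).mul (hGr z hz)).differentiableAt).differentiableWithinAt
  have hball : HasFPowerSeriesOnBall H (cauchyPowerSeries H z₀ R) z₀ R :=
    hHd.hasFPowerSeriesOnBall hr'
  have hfac := hball.factorial_smul (1 : ℂ) (2 * m - 1)
  rw [← iteratedDeriv_eq_iteratedFDeriv, hpart1] at hfac
  have hcoeff : (cauchyPowerSeries H z₀ R (2 * m - 1) fun _ => (1 : ℂ)) = 0 := by
    rcases smul_eq_zero.mp hfac with h | h
    · exact absurd h (Nat.factorial_ne_zero _)
    · exact h
  rw [cauchyPowerSeries_apply] at hcoeff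
  have hint : (∮ z in C(z₀, (R : ℝ)), ((1 : ℂ) / (z - z₀)) ^ (2 * m - 1) • (z - z₀)⁻¹ • H z)
      = ∮ z in C(z₀, (R : ℝ)), F z * G z / (z - z₀) ^ (2 * m) := by
    refine circleIntegral.integral_congr hr.le fun z _ => ?_
    simp only [smul_eq_mul, one_div, hH]
    rw [div_eq_mul_inv, ← inv_pow]
    have : (z - z₀)⁻¹ ^ (2 * m - 1) * ((z - z₀)⁻¹ * (F z * G z))
        = F z * G z * ((z - z₀)⁻¹ ^ (2 * m - 1) * (z - z₀)⁻¹) := by ring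
    rw [this, ← pow_succ]
    congr 2
    omega
  rw [hint] at hcoeff
  have h2pi : (2 * Real.pi * Complex.I : ℂ)⁻¹ ≠ 0 := by
    simp [Real.pi_ne_zero, Complex.I_ne_zero]
  rcases smul_eq_zero.mp hcoeff with h | h
  · exact absurd h h2pi
  · exact h
end

section
/- The subspace Q_λ is dense in Q_{λ,ℝ} with respect to the product ⟨·,·⟩: if p ∈ Q_{λ,ℝ} satisfies ⟨p,q⟩ = 0 for every q ∈ Q_λ (with any admissible ξ), then p = 0. -/
/-- Physicists' Hermite polynomials: `H 0 = 1`, `H (l+1) = 2·X·H l − (H l)'`. -/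
noncomputable def Hpoly : ℕ → Polynomial ℂ
  | 0 => 1
  | (l + 1) => 2 * Polynomial.X * Hpoly l - Polynomial.derivative (Hpoly l)

/-- The Wronskian `W_λ = Wr(H_{k_1},…,H_{k_n})`. -/
noncomputable def Wlam (n : ℕ) (k : Fin n → ℕ) : Polynomial ℂ :=
  Matrix.det (Matrix.of fun i j : Fin n => Polynomial.derivative^[(i : ℕ)] (Hpoly (k j)))

/-- The complex exceptional Hermite polynomial `H_{λ,l} = Wr(H_l, H_{k_1},…,H_{k_n})`. -/
noncomputable def Hexc (n : ℕ) (k : Fin n → ℕ) (l : ℕ) : Polynomial ℂ :=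
  Matrix.det (Matrix.of fun i j : Fin (n + 1) =>
    Fin.cases (Polynomial.derivative^[(i : ℕ)] (Hpoly l))
      (fun j' => Polynomial.derivative^[(i : ℕ)] (Hpoly (k j'))) j)

/-- `ψ` is quasi-invariant at `z₀` with multiplicity `m`: `(z−z₀)^m·ψ(z)` extends
analytically across `z₀` and all its odd-order derivatives of orders `1,3,…,2m−1`
vanish at `z₀`. -/
def QuasiInv (ψ : ℂ → ℂ) (z₀ : ℂ) (m : ℕ) : Prop :=
  ∃ F : ℂ → ℂ, AnalyticAt ℂ F z₀ ∧
    (∀ᶠ z in nhdsWithin z₀ {z₀}ᶜ, F z = (z - z₀) ^ m * ψ z) ∧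
    ∀ j : ℕ, 1 ≤ j → j ≤ m → iteratedDeriv (2 * j - 1) F z₀ = 0

/-- `Q_λ`: polynomials `p` with `p(z)·e^{−z²/2}/W_λ(z)` quasi-invariant at every zero
of `W_λ`, with the multiplicity of that zero. -/
def QlamSet (n : ℕ) (k : Fin n → ℕ) : Set (Polynomial ℂ) :=
  {p | ∀ z₀ : ℂ, (Wlam n k).eval z₀ = 0 →
    QuasiInv (fun z => Polynomial.eval z p * Complex.exp (-z ^ 2 / 2) /
        Polynomial.eval z (Wlam n k)) z₀ ((Wlam n k).rootMultiplicity z₀)}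

/-- `Q_{λ,ℝ}`: as `Q_λ`, but quasi-invariance is required only at the real zeros. -/
def QlamRSet (n : ℕ) (k : Fin n → ℕ) : Set (Polynomial ℂ) :=
  {p | ∀ z₀ : ℂ, z₀.im = 0 → (Wlam n k).eval z₀ = 0 →
    QuasiInv (fun z => Polynomial.eval z p * Complex.exp (-z ^ 2 / 2) /
        Polynomial.eval z (Wlam n k)) z₀ ((Wlam n k).rootMultiplicity z₀)}

/-- `ξ` is admissible: `0 < |ξ| < |Im z_i|` for every non-real zero `z_i` of `W_λ`. -/
def AdmXi (n : ℕ) (k : Fin n → ℕ) (ξ : ℝ) : Prop :=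
  0 < |ξ| ∧ ∀ z₀ : ℂ, (Wlam n k).eval z₀ = 0 → z₀.im ≠ 0 → |ξ| < |z₀.im|

/-- The sesquilinear product `⟨p,q⟩ = ∫_ℝ p(x+iξ)·\bar q(x+iξ)·e^{−(x+iξ)²}·W_λ(x+iξ)^{−2} dx`,
where `\bar q(z) = conj (q (conj z))` is the Schwarz conjugate. -/
noncomputable def hermProd (n : ℕ) (k : Fin n → ℕ) (ξ : ℝ) (p q : Polynomial ℂ) : ℂ :=
  ∫ x : ℝ, Polynomial.eval ((x : ℂ) + ξ * Complex.I) p *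
      (starRingEnd ℂ) (Polynomial.eval ((starRingEnd ℂ) ((x : ℂ) + ξ * Complex.I)) q) *
      Complex.exp (-((x : ℂ) + ξ * Complex.I) ^ 2) /
      (Polynomial.eval ((x : ℂ) + ξ * Complex.I) (Wlam n k)) ^ 2



open Polynomial Complex MeasureTheory Filter Set

section Aux

lemma conj_eval (Q : Polynomial ℂ) (z : ℂ) :
    (starRingEnd ℂ) (Q.eval z) = (Q.map (starRingEnd ℂ)).eval ((starRingEnd ℂ) z) := by
  simp [Polynomial.eval_map, Polynomial.eval₂_eq_sum_range, Polynomial.eval_eq_sum_range,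
    map_sum]

lemma hpoly_map (l : ℕ) : (Hpoly l).map (starRingEnd ℂ) = Hpoly l := by
  induction l with
  | zero => simp [Hpoly]
  | succ l ih =>
    rw [Hpoly, Polynomial.map_sub, Polynomial.map_mul, ← Polynomial.derivative_map, ih]
    congr 1
    simp [Polynomial.map_mul]

lemma wlam_map (n : ℕ) (k : Fin n → ℕ) : (Wlam n k).map (starRingEnd ℂ) = Wlam n k := by
  unfold Wlam
  have : (Polynomial.mapRingHom (starRingEnd ℂ))
      (Matrix.det (Matrix.of fun i j : Fin n => Polynomial.derivative^[(i : ℕ)] (Hpoly (k j))))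
      = Matrix.det (Matrix.of fun i j : Fin n => Polynomial.derivative^[(i : ℕ)] (Hpoly (k j))) := by
    rw [RingHom.map_det]
    refine congrArg Matrix.det (Matrix.ext fun i j => ?_)
    simp only [RingHom.mapMatrix_apply, Matrix.map_apply, Matrix.of_apply,
      Polynomial.coe_mapRingHom]
    rw [← Polynomial.iterate_derivative_map, hpoly_map]
  simpa using this

noncomputable def Dh (P : Polynomial ℂ) : Polynomial ℂ :=
  Polynomial.derivative P - Polynomial.X * P

noncomputable def Dg (P : Polynomial ℂ) : Polynomial ℂ :=
  Polynomial.derivative P - 2 * Polynomial.X * P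

lemma hasDerivAt_half (P : Polynomial ℂ) (z : ℂ) :
    HasDerivAt (fun w => P.eval w * Complex.exp (-w ^ 2 / 2))
      ((Dh P).eval z * Complex.exp (-z ^ 2 / 2)) z := by
  have h1 : HasDerivAt (fun w : ℂ => -w ^ 2 / 2) (-z) z := by
    have := ((hasDerivAt_pow 2 z).neg).div_const 2
    refine this.congr_deriv ?_
    norm_num
    ring
  have h2 := (P.hasDerivAt z).mul h1.cexp
  refine h2.congr_deriv ?_
  simp only [Dh, Polynomial.eval_sub, Polynomial.eval_mul, Polynomial.eval_X]
  ring

lemma hasDerivAt_full (P : Polynomial ℂ) (z : ℂ) :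
    HasDerivAt (fun w => P.eval w * Complex.exp (-w ^ 2))
      ((Dg P).eval z * Complex.exp (-z ^ 2)) z := by
  have h1 : HasDerivAt (fun w : ℂ => -w ^ 2) (-(2 * z)) z := by
    have := (hasDerivAt_pow 2 z).neg
    refine this.congr_deriv ?_
    norm_num
  have h2 := (P.hasDerivAt z).mul h1.cexp
  refine h2.congr_deriv ?_
  simp only [Dg, Polynomial.eval_sub, Polynomial.eval_mul, Polynomial.eval_X,
    Polynomial.eval_ofNat]
  ring

lemma iteratedDeriv_half (P : Polynomial ℂ) (j : ℕ) :
    iteratedDeriv j (fun w => P.eval w * Complex.exp (-w ^ 2 / 2))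
      = fun w => (Dh^[j] P).eval w * Complex.exp (-w ^ 2 / 2) := by
  induction j generalizing P with
  | zero => simp
  | succ j ih =>
    have hd : deriv (fun w => P.eval w * Complex.exp (-w ^ 2 / 2))
        = fun w => (Dh P).eval w * Complex.exp (-w ^ 2 / 2) :=
      funext fun w => (hasDerivAt_half P w).deriv
    rw [iteratedDeriv_succ', hd, ih, Function.iterate_succ_apply]

lemma dvd_Dh {a : ℂ} {r : ℕ} {P : Polynomial ℂ} (h : (X - C a) ^ r ∣ P) :
    (X - C a) ^ (r - 1) ∣ Dh P := by
  obtain ⟨Q, rfl⟩ := h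
  cases r with
  | zero => simpa using one_dvd _
  | succ r =>
    refine ⟨Polynomial.C ((r + 1 : ℕ) : ℂ) * Q + (X - C a) * Polynomial.derivative Q
      - X * (X - C a) * Q, ?_⟩
    rw [Dh, Polynomial.derivative_mul, Polynomial.derivative_pow, Polynomial.derivative_X_sub_C]
    simp only [Nat.add_sub_cancel]
    push_cast
    ring

lemma dvd_Dh_iter (a : ℂ) (P : Polynomial ℂ) (r i : ℕ) (h : (X - C a) ^ r ∣ P) :
    (X - C a) ^ (r - i) ∣ Dh^[i] P := by
  induction i generalizing P r with
  | zero => simpa using h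
  | succ i ih =>
    rw [Function.iterate_succ_apply]
    have := ih (Dh P) (r - 1) (dvd_Dh h)
    have hr : r - 1 - i = r - (i + 1) := by omega
    rwa [hr] at this

lemma mem_Qlam (n : ℕ) (k : Fin n → ℕ) (hW : Wlam n k ≠ 0) (s : Polynomial ℂ) :
    (Wlam n k) ^ 2 * s ∈ QlamSet n k := by
  intro z₀ hz₀
  set W := Wlam n k with hWdef
  set m := W.rootMultiplicity z₀ with hm
  set P₀ : Polynomial ℂ := (X - C z₀) ^ m * W * s with hP₀
  have hmpos : 1 ≤ m := (Polynomial.rootMultiplicity_pos hW).mpr hz₀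
  refine ⟨fun z => P₀.eval z * Complex.exp (-z ^ 2 / 2), ?_, ?_, ?_⟩
  · apply Differentiable.analyticAt
    exact (P₀.differentiable).mul (Complex.differentiable_exp.comp
      (((differentiable_pow 2).neg).div_const 2))
  · have hfin : {z : ℂ | W.IsRoot z}.Finite := Polynomial.finite_setOf_isRoot hW
    have hcl : IsClosed ({z : ℂ | W.IsRoot z} \ {z₀}) :=
      (hfin.subset Set.diff_subset).isClosed
    have hmem : ({z : ℂ | W.IsRoot z} \ {z₀})ᶜ ∈ nhds z₀ :=
      hcl.isOpen_compl.mem_nhds (by simp)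
    filter_upwards [nhdsWithin_le_nhds hmem, self_mem_nhdsWithin] with z hz hz0
    have hWz : W.eval z ≠ 0 := fun h => hz ⟨h, hz0⟩
    simp only [hP₀, Polynomial.eval_mul, Polynomial.eval_pow, Polynomial.eval_sub,
      Polynomial.eval_X, Polynomial.eval_C]
    field_simp
  · intro j hj1 hjm
    have h2m : (X - C z₀) ^ (2 * m) ∣ P₀ := by
      obtain ⟨g, hg⟩ := W.pow_rootMultiplicity_dvd z₀
      refine ⟨g * s, ?_⟩
      rw [hP₀]
      conv_lhs => rw [hg]
      rw [← hm, two_mul, pow_add]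
      ring
    have hdvd := dvd_Dh_iter z₀ P₀ (2 * m) (2 * j - 1) h2m
    have hroot : (Dh^[2 * j - 1] P₀).eval z₀ = 0 := by
      have h1 : (X - C z₀) ∣ (X - C z₀) ^ (2 * m - (2 * j - 1)) :=
        dvd_pow_self _ (by omega)
      exact Polynomial.dvd_iff_isRoot.mp (h1.trans hdvd)
    rw [iteratedDeriv_half]
    simp [hroot]

lemma re_quad (c d : ℂ) (x : ℝ) :
    (-(x : ℂ) ^ 2 + c * (x : ℂ) + d).re = -x ^ 2 + c.re * x + d.re := by
  simp [Complex.add_re, Complex.mul_re, Complex.ofReal_re, Complex.ofReal_im, pow_two]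

lemma norm_mono_gauss (i : ℕ) (c d : ℂ) (x : ℝ) :
    ‖(x : ℂ) ^ i * Complex.exp (-(x : ℂ) ^ 2 + c * (x : ℂ) + d)‖
      = |x| ^ i * Real.exp (-x ^ 2 + c.re * x + d.re) := by
  rw [norm_mul, norm_pow, Complex.norm_real, Complex.norm_exp, re_quad,
    Real.norm_eq_abs]

lemma integrable_mono_gauss (i : ℕ) (c d : ℂ) :
    Integrable (fun x : ℝ => (x : ℂ) ^ i * Complex.exp (-(x : ℂ) ^ 2 + c * (x : ℂ) + d)) := by
  have h0 : Integrable (fun x : ℝ => x ^ i * Real.exp (-(1/2) * x ^ 2)) := by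
    have h := integrable_rpow_mul_exp_neg_mul_sq (b := 1/2) (s := (i : ℝ)) (by norm_num)
      (lt_of_lt_of_le (by norm_num) (Nat.cast_nonneg i))
    simpa [Real.rpow_natCast] using h
  have hbase : Integrable (fun x : ℝ => |x| ^ i * Real.exp (-(1/2) * x ^ 2)) := by
    refine h0.abs.congr (Eventually.of_forall fun x => ?_)
    simp only []
    rw [abs_mul, _root_.abs_pow, _root_.abs_of_pos (Real.exp_pos _)]
  refine ((hbase.const_mul (Real.exp (c.re ^ 2 / 2 + d.re))).mono' ?_ ?_)
  · apply Continuous.aestronglyMeasurable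
    exact (Complex.continuous_ofReal.pow i).mul (Complex.continuous_exp.comp (by continuity))
  · refine Eventually.of_forall fun x => ?_
    rw [norm_mono_gauss]
    have h1 : Real.exp (-x ^ 2 + c.re * x + d.re)
        ≤ Real.exp (c.re ^ 2 / 2 + d.re) * Real.exp (-(1/2) * x ^ 2) := by
      rw [← Real.exp_add]
      apply Real.exp_le_exp.mpr
      nlinarith [sq_nonneg (x - c.re)]
    calc |x| ^ i * Real.exp (-x ^ 2 + c.re * x + d.re)
        ≤ |x| ^ i * (Real.exp (c.re ^ 2 / 2 + d.re) * Real.exp (-(1/2) * x ^ 2)) := by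
          exact mul_le_mul_of_nonneg_left h1 (by positivity)
      _ = Real.exp (c.re ^ 2 / 2 + d.re) * (|x| ^ i * Real.exp (-(1/2) * x ^ 2)) := by ring

lemma tendsto_mono_gauss_top (i : ℕ) (c d : ℂ) :
    Tendsto (fun x : ℝ => (x : ℂ) ^ i * Complex.exp (-(x : ℂ) ^ 2 + c * (x : ℂ) + d))
      atTop (nhds 0) := by
  have hg : Tendsto (fun x : ℝ => Real.exp (-x ^ 2 + (c.re + i) * x + d.re)) atTop (nhds 0) := by
    have hq : Tendsto (fun x : ℝ => -x ^ 2 + (c.re + i) * x + d.re) atTop atBot := by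
      have h1 : Tendsto (fun x : ℝ => x * (x - (c.re + i))) atTop atTop :=
        tendsto_id.atTop_mul_atTop₀ (tendsto_atTop_add_const_right _ _ tendsto_id)
      have h2 : Tendsto (fun x : ℝ => -(x * (x - (c.re + i))) + d.re) atTop atBot :=
        tendsto_atBot_add_const_right _ _ (tendsto_neg_atBot_iff.mpr h1)
      refine h2.congr fun x => by ring
    exact Real.tendsto_exp_atBot.comp hq
  apply squeeze_zero_norm' ?_ hg
  · filter_upwards [eventually_ge_atTop (0 : ℝ)] with x hx
    rw [norm_mono_gauss, _root_.abs_of_nonneg hx]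
    have h1 : x ^ i ≤ Real.exp ((i : ℝ) * x) := by
      calc x ^ i ≤ Real.exp x ^ i := pow_le_pow_left₀ hx (by linarith [Real.add_one_le_exp x]) i
        _ = Real.exp ((i : ℝ) * x) := by rw [← Real.exp_nat_mul]
    calc x ^ i * Real.exp (-x ^ 2 + c.re * x + d.re)
        ≤ Real.exp ((i : ℝ) * x) * Real.exp (-x ^ 2 + c.re * x + d.re) :=
          mul_le_mul_of_nonneg_right h1 (Real.exp_nonneg _)
      _ = Real.exp (-x ^ 2 + (c.re + i) * x + d.re) := by rw [← Real.exp_add]; ring_nf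

lemma tendsto_mono_gauss_bot (i : ℕ) (c d : ℂ) :
    Tendsto (fun x : ℝ => (x : ℂ) ^ i * Complex.exp (-(x : ℂ) ^ 2 + c * (x : ℂ) + d))
      atBot (nhds 0) := by
  have h := (tendsto_mono_gauss_top i (-c) d).const_mul ((-1 : ℂ) ^ i)
  rw [mul_zero] at h
  have h2 := h.comp tendsto_neg_atBot_atTop
  refine h2.congr fun x => ?_
  have hx : ((-x : ℝ) : ℂ) = -(x : ℂ) := by push_cast; ring
  rw [Function.comp_apply, hx]
  have he : -(-(x : ℂ)) ^ 2 + -c * (-(x : ℂ)) + d = -(x : ℂ) ^ 2 + c * (x : ℂ) + d := by ring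
  rw [he, ← mul_assoc, ← mul_pow]
  norm_num

lemma phi_expand (P : Polynomial ℂ) (c : ℂ) (x : ℝ) :
    P.eval ((x : ℂ) + c) * Complex.exp (-((x : ℂ) + c) ^ 2)
      = ∑ i ∈ Finset.range ((P.comp (X + C c)).natDegree + 1),
          (P.comp (X + C c)).coeff i *
            ((x : ℂ) ^ i * Complex.exp (-(x : ℂ) ^ 2 + (-2 * c) * (x : ℂ) + (-c ^ 2))) := by
  have e1 : Complex.exp (-((x : ℂ) + c) ^ 2)
      = Complex.exp (-(x : ℂ) ^ 2 + (-2 * c) * (x : ℂ) + (-c ^ 2)) := by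
    congr 1; ring
  have e2 : P.eval ((x : ℂ) + c)
      = ∑ i ∈ Finset.range ((P.comp (X + C c)).natDegree + 1),
          (P.comp (X + C c)).coeff i * (x : ℂ) ^ i := by
    rw [← Polynomial.eval_eq_sum_range, Polynomial.eval_comp]
    simp
  rw [e1, e2, Finset.sum_mul]
  exact Finset.sum_congr rfl fun i _ => by ring

lemma integrable_phi (P : Polynomial ℂ) (c : ℂ) :
    Integrable (fun x : ℝ => P.eval ((x : ℂ) + c) * Complex.exp (-((x : ℂ) + c) ^ 2)) := by
  rw [show (fun x : ℝ => P.eval ((x : ℂ) + c) * Complex.exp (-((x : ℂ) + c) ^ 2))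
      = fun x : ℝ => ∑ i ∈ Finset.range ((P.comp (X + C c)).natDegree + 1),
          (P.comp (X + C c)).coeff i *
            ((x : ℂ) ^ i * Complex.exp (-(x : ℂ) ^ 2 + (-2 * c) * (x : ℂ) + (-c ^ 2)))
    from funext (phi_expand P c)]
  exact integrable_finset_sum _ fun i _ => (integrable_mono_gauss i _ _).const_mul _

lemma tendsto_phi_top (P : Polynomial ℂ) (c : ℂ) :
    Tendsto (fun x : ℝ => P.eval ((x : ℂ) + c) * Complex.exp (-((x : ℂ) + c) ^ 2))
      atTop (nhds 0) := by
  rw [show (fun x : ℝ => P.eval ((x : ℂ) + c) * Complex.exp (-((x : ℂ) + c) ^ 2))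
      = fun x : ℝ => ∑ i ∈ Finset.range ((P.comp (X + C c)).natDegree + 1),
          (P.comp (X + C c)).coeff i *
            ((x : ℂ) ^ i * Complex.exp (-(x : ℂ) ^ 2 + (-2 * c) * (x : ℂ) + (-c ^ 2)))
    from funext (phi_expand P c)]
  have := tendsto_finset_sum (Finset.range ((P.comp (X + C c)).natDegree + 1))
    (fun i _ => ((tendsto_mono_gauss_top i (-2 * c) (-c ^ 2)).const_mul
      ((P.comp (X + C c)).coeff i)))
  simpa using this

lemma tendsto_phi_bot (P : Polynomial ℂ) (c : ℂ) :
    Tendsto (fun x : ℝ => P.eval ((x : ℂ) + c) * Complex.exp (-((x : ℂ) + c) ^ 2))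
      atBot (nhds 0) := by
  rw [show (fun x : ℝ => P.eval ((x : ℂ) + c) * Complex.exp (-((x : ℂ) + c) ^ 2))
      = fun x : ℝ => ∑ i ∈ Finset.range ((P.comp (X + C c)).natDegree + 1),
          (P.comp (X + C c)).coeff i *
            ((x : ℂ) ^ i * Complex.exp (-(x : ℂ) ^ 2 + (-2 * c) * (x : ℂ) + (-c ^ 2)))
    from funext (phi_expand P c)]
  have := tendsto_finset_sum (Finset.range ((P.comp (X + C c)).natDegree + 1))
    (fun i _ => ((tendsto_mono_gauss_bot i (-2 * c) (-c ^ 2)).const_mul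
      ((P.comp (X + C c)).coeff i)))
  simpa using this

lemma phi_deriv_zero (P : Polynomial ℂ) (c : ℂ) :
    ∫ x : ℝ, (Dg P).eval ((x : ℂ) + c) * Complex.exp (-((x : ℂ) + c) ^ 2) = 0 := by
  set f : ℝ → ℂ := fun x => P.eval ((x : ℂ) + c) * Complex.exp (-((x : ℂ) + c) ^ 2) with hf
  set f' : ℝ → ℂ := fun x => (Dg P).eval ((x : ℂ) + c) * Complex.exp (-((x : ℂ) + c) ^ 2) with hf'
  have hderiv : ∀ x : ℝ, HasDerivAt f (f' x) x := by
    intro x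
    have hshift : HasDerivAt (fun w : ℂ => w + c) 1 ((x : ℂ)) := (hasDerivAt_id _).add_const c
    have hc : HasDerivAt (fun w : ℂ => P.eval (w + c) * Complex.exp (-(w + c) ^ 2))
        ((Dg P).eval ((x : ℂ) + c) * Complex.exp (-((x : ℂ) + c) ^ 2)) ((x : ℂ)) := by
      have := (hasDerivAt_full P ((x : ℂ) + c)).comp ((x : ℂ)) hshift
      exact this.congr_deriv (mul_one _)
    exact hc.comp_ofReal
  have hint : Integrable f' := integrable_phi (Dg P) c
  have h1 : ∫ x in Set.Ioi (0 : ℝ), f' x = 0 - f 0 :=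
    MeasureTheory.integral_Ioi_of_hasDerivAt_of_tendsto' (fun x _ => hderiv x)
      hint.integrableOn (tendsto_phi_top P c)
  have h2 : ∫ x in Set.Iic (0 : ℝ), f' x = f 0 - 0 :=
    MeasureTheory.integral_Iic_of_hasDerivAt_of_tendsto' (fun x _ => hderiv x)
      hint.integrableOn (tendsto_phi_bot P c)
  have h3 := MeasureTheory.integral_add_compl (measurableSet_Iic (a := (0:ℝ))) hint
  rw [Set.compl_Iic] at h3
  rw [← h3, h1, h2]
  ring

lemma Dg_add (P Q : Polynomial ℂ) : Dg (P + Q) = Dg P + Dg Q := by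
  simp only [Dg, derivative_add]
  ring

lemma exists_decomp (P : Polynomial ℂ) : ∃ t : ℂ, ∃ Q : Polynomial ℂ, P = C t + Dg Q := by
  suffices H : ∀ N : ℕ, ∀ P : Polynomial ℂ, P.natDegree ≤ N → ∃ t Q, P = C t + Dg Q from
    H P.natDegree P le_rfl
  intro N
  induction N with
  | zero =>
    intro P hP
    exact ⟨P.coeff 0, 0, by rw [Polynomial.eq_C_of_natDegree_le_zero hP]; simp [Dg]⟩
  | succ N ih =>
    intro P hP
    by_cases h : P.natDegree ≤ N
    · exact ih P h
    · set a := P.coeff (N + 1) with ha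
      set Q₀ : Polynomial ℂ := C (-(a / 2)) * X ^ N with hQ₀
      have hDQ : Dg Q₀ = C (-(a / 2)) * (C (N : ℂ) * X ^ (N - 1)) + C a * X ^ (N + 1) := by
        rw [hQ₀, Dg, Polynomial.derivative_C_mul, Polynomial.derivative_X_pow]
        have : (2 : Polynomial ℂ) * X * (C (-(a / 2)) * X ^ N) = -(C a * X ^ (N + 1)) := by
          rw [show C (-(a/2)) = -C (a/2) by simp, pow_succ]
          have h2 : (C (a/2) : Polynomial ℂ) * 2 = C a := by
            rw [show (2 : Polynomial ℂ) = C 2 from rfl, ← C_mul]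
            norm_num
          calc (2 : Polynomial ℂ) * X * (-C (a/2) * X ^ N)
              = -((C (a/2) * 2) * (X ^ N * X)) := by ring
            _ = -(C a * (X ^ N * X)) := by rw [h2]
        rw [this]
        ring
      have hR : (P - Dg Q₀).natDegree ≤ N := by
        refine Polynomial.natDegree_le_iff_coeff_eq_zero.mpr fun M hM => ?_
        rw [Polynomial.coeff_sub, hDQ]
        simp only [Polynomial.coeff_add, Polynomial.coeff_C_mul, Polynomial.coeff_X_pow]
        rcases eq_or_lt_of_le (Nat.succ_le_of_lt hM) with h1 | h1
        · rw [← h1]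
          simp only [Nat.succ_eq_add_one, if_pos rfl, if_neg (by omega : ¬ (N + 1 = N - 1))]
          simp [ha]
        · rw [Polynomial.coeff_eq_zero_of_natDegree_lt (by omega : P.natDegree < M),
            if_neg (by omega : ¬ (M = N - 1)), if_neg (by omega : ¬ (M = N + 1))]
          simp
      obtain ⟨t, Q, hQ⟩ := ih (P - Dg Q₀) hR
      refine ⟨t, Q + Q₀, ?_⟩
      rw [Dg_add]
      rw [sub_eq_iff_eq_add] at hQ
      rw [hQ]
      ring

lemma base_integral (c : ℂ) :
    ∫ x : ℝ, Complex.exp (-((x : ℂ) + c) ^ 2) = (Real.pi : ℂ) ^ (1 / 2 : ℂ) := by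
  have h : ∀ x : ℝ, -((x : ℂ) + c) ^ 2 = (-1) * (x : ℂ) ^ 2 + (-2 * c) * (x : ℂ) + (-c ^ 2) :=
    fun x => by ring
  simp_rw [h]
  rw [integral_cexp_quadratic (by norm_num) (-2 * c) (-c ^ 2)]
  have : -c ^ 2 - (-2 * c) ^ 2 / (4 * (-1)) = 0 := by ring
  rw [this, Complex.exp_zero, mul_one]
  norm_num

lemma phi_value (P : Polynomial ℂ) (c : ℂ) :
    ∫ x : ℝ, P.eval ((x : ℂ) + c) * Complex.exp (-((x : ℂ) + c) ^ 2)
      = ∫ x : ℝ, P.eval (x : ℂ) * Complex.exp (-(x : ℂ) ^ 2) := by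
  have key : ∀ c : ℂ, ∀ t : ℂ, ∀ Q : Polynomial ℂ,
      ∫ x : ℝ, (C t + Dg Q).eval ((x : ℂ) + c) * Complex.exp (-((x : ℂ) + c) ^ 2)
        = t * (Real.pi : ℂ) ^ (1 / 2 : ℂ) := by
    intro c t Q
    have hsplit : (∫ x : ℝ, (C t + Dg Q).eval ((x : ℂ) + c) * Complex.exp (-((x : ℂ) + c) ^ 2))
        = ∫ x : ℝ, ((C t).eval ((x : ℂ) + c) * Complex.exp (-((x : ℂ) + c) ^ 2)
          + (Dg Q).eval ((x : ℂ) + c) * Complex.exp (-((x : ℂ) + c) ^ 2)) := by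
      congr 1
      funext x
      rw [Polynomial.eval_add]
      ring
    rw [hsplit, MeasureTheory.integral_add (integrable_phi (C t) c) (integrable_phi (Dg Q) c),
      phi_deriv_zero, add_zero]
    simp only [Polynomial.eval_C]
    rw [MeasureTheory.integral_const_mul, base_integral]
  obtain ⟨t, Q, hPQ⟩ := exists_decomp P
  rw [hPQ]
  rw [key c t Q]
  have h0 := key 0 t Q
  simp only [Complex.ofReal_zero, add_zero] at h0
  rw [h0]

end Aux

/-- `Q_λ` is dense in `Q_{λ,ℝ}`: if `p ∈ Q_{λ,ℝ}` is orthogonal to every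
`q ∈ Q_λ`, then `p = 0`. -/
theorem stmt_4 (n : ℕ) (k : Fin n → ℕ) (hk : StrictAnti k)
    (p : Polynomial ℂ) (hp : p ∈ QlamRSet n k)
    (ξ : ℝ) (hξ : AdmXi n k ξ)
    (horth : ∀ q ∈ QlamSet n k, hermProd n k ξ p q = 0) :
    p = 0 := by
  have hξ0 : ξ ≠ 0 := by
    intro h
    have := hξ.1
    rw [h] at this
    simpa using this
  have hW0 : Wlam n k ≠ 0 := by
    intro h
    have h1 := hξ.2 ((ξ : ℂ) * Complex.I) (by simp [h]) (by simpa using hξ0)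
    simp at h1
  have hWline : ∀ x : ℝ, (Wlam n k).eval ((x : ℂ) + ξ * Complex.I) ≠ 0 := by
    intro x hx
    have him : ((x : ℂ) + ξ * Complex.I).im = ξ := by simp
    have := hξ.2 _ hx (by rw [him]; exact hξ0)
    rw [him] at this
    exact lt_irrefl _ this
  set pc := p.map (starRingEnd ℂ) with hpc
  have hq := horth _ (mem_Qlam n k hW0 p)
  have hint_eq : hermProd n k ξ p ((Wlam n k) ^ 2 * p)
      = ∫ x : ℝ, (p * pc).eval ((x : ℂ) + (ξ : ℂ) * Complex.I)
          * Complex.exp (-((x : ℂ) + (ξ : ℂ) * Complex.I) ^ 2) := by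
    unfold hermProd
    congr 1
    funext x
    set z := (x : ℂ) + (ξ : ℂ) * Complex.I with hz
    have h1 : (starRingEnd ℂ) (Polynomial.eval ((starRingEnd ℂ) z) ((Wlam n k) ^ 2 * p))
        = ((Wlam n k).eval z) ^ 2 * pc.eval z := by
      rw [conj_eval]
      simp [Polynomial.map_mul, Polynomial.map_pow, wlam_map, hpc]
    rw [h1, Polynomial.eval_mul]
    have h2 : (Wlam n k).eval z ≠ 0 := hWline x
    field_simp
  have h0 : ∫ x : ℝ, (p * pc).eval (x : ℂ) * Complex.exp (-(x : ℂ) ^ 2) = 0 := by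
    rw [← phi_value (p * pc) ((ξ : ℂ) * Complex.I), ← hint_eq]
    exact hq
  -- now extract realness / positivity
  set g : ℝ → ℝ := fun x => Complex.normSq (p.eval (x : ℂ)) * Real.exp (-x ^ 2) with hg
  have hpc_eval : ∀ x : ℝ, pc.eval (x : ℂ) = (starRingEnd ℂ) (p.eval (x : ℂ)) := by
    intro x
    rw [conj_eval p ((x : ℂ)), Complex.conj_ofReal]
  have hgf : ∀ x : ℝ, ((g x : ℝ) : ℂ)
      = (p * pc).eval (x : ℂ) * Complex.exp (-(x : ℂ) ^ 2) := by
    intro x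
    calc ((g x : ℝ) : ℂ)
        = ((Complex.normSq (p.eval (x : ℂ)) : ℂ)) * ((Real.exp (-x ^ 2) : ℝ) : ℂ) := by
          rw [hg]; push_cast; ring
      _ = (p * pc).eval (x : ℂ) * Complex.exp (-(x : ℂ) ^ 2) := by
          rw [← Complex.mul_conj, Complex.ofReal_exp, Polynomial.eval_mul, hpc_eval]
          push_cast
          ring
  have hF : Integrable (fun x : ℝ => (p * pc).eval (x : ℂ) * Complex.exp (-(x : ℂ) ^ 2)) := by
    simpa using integrable_phi (p * pc) 0
  have hgint : Integrable g := by
    refine hF.norm.congr (Eventually.of_forall fun x => ?_)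
    show ‖(p * pc).eval (x : ℂ) * Complex.exp (-(x : ℂ) ^ 2)‖ = g x
    rw [← hgf x, Complex.norm_real, Real.norm_eq_abs]
    exact _root_.abs_of_nonneg (mul_nonneg (Complex.normSq_nonneg _) (Real.exp_pos _).le)
  have hint0 : ∫ x : ℝ, g x = 0 := by
    have h1 : ∫ x : ℝ, ((g x : ℝ) : ℂ) = 0 := by
      rw [show (fun x : ℝ => ((g x : ℝ) : ℂ))
          = fun x : ℝ => (p * pc).eval (x : ℂ) * Complex.exp (-(x : ℂ) ^ 2) from funext hgf]
      exact h0
    have h2 : (∫ x : ℝ, ((g x : ℝ) : ℂ)) = (((∫ x : ℝ, g x) : ℝ) : ℂ) := integral_ofReal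
    rw [h2] at h1
    exact Complex.ofReal_eq_zero.mp h1
  have hae : g =ᵐ[volume] 0 :=
    (MeasureTheory.integral_eq_zero_iff_of_nonneg
      (fun x => mul_nonneg (Complex.normSq_nonneg _) (Real.exp_pos _).le) hgint).mp hint0
  have hcont : Continuous g :=
    (Complex.continuous_normSq.comp (p.continuous.comp Complex.continuous_ofReal)).mul
      (Real.continuous_exp.comp ((continuous_pow 2).neg))
  have hgeq : g = 0 := (Continuous.ae_eq_iff_eq volume hcont continuous_const).mp hae
  have heval : ∀ x : ℝ, p.eval (x : ℂ) = 0 := by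
    intro x
    have hx : g x = 0 := by rw [hgeq]; rfl
    rw [hg] at hx
    have := (mul_eq_zero.mp hx).resolve_right (Real.exp_pos _).ne'
    exact Complex.normSq_eq_zero.mp this
  refine Polynomial.eq_zero_of_infinite_isRoot p ?_
  exact Set.infinite_of_injective_forall_mem (f := fun x : ℝ => (x : ℂ))
    Complex.ofReal_injective (fun x => heval x)
end

section
/- The codimension of Q_λ in Q_{λ,ℝ} equals |λ| − Σ_{z_i ∈ Z_λ^ℝ} m_i, i.e. the dimension of the quotient vector space Q_{λ,ℝ}/Q_λ equals the degree |λ| of W_λ minus the total multiplicity of the real zeros of W_λ (equivalently, the total multiplicity of the non-real zeros of W_λ). -/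
open Polynomial

lemma Hpoly_natDegree_le (l : ℕ) : (Hpoly l).natDegree ≤ l := by
  induction l with
  | zero => simp [Hpoly]
  | succ l ih =>
    rw [Hpoly]
    refine le_trans (natDegree_sub_le _ _) ?_
    simp only [max_le_iff]
    constructor
    · refine le_trans (natDegree_mul_le) ?_
      have : (2 * X : ℂ[X]).natDegree ≤ 1 := by
        refine le_trans natDegree_mul_le ?_
        simp
      omega
    · have := natDegree_derivative_le (Hpoly l)
      omega

lemma Hpoly_coeff_self (l : ℕ) : (Hpoly l).coeff l = 2 ^ l := by
  induction l with
  | zero => simp [Hpoly]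
  | succ l ih =>
    rw [Hpoly]
    have h1 : (2 * X * Hpoly l).coeff (l + 1) = 2 * (Hpoly l).coeff l := by
      have h2C : (2 : ℂ[X]) = Polynomial.C 2 := (map_ofNat Polynomial.C 2).symm
      have : (2 * X * Hpoly l : ℂ[X]) = Polynomial.C 2 * (X * Hpoly l) := by
        rw [← mul_assoc, ← h2C]
      rw [this, coeff_C_mul, coeff_X_mul]
    have h2 : ((derivative (Hpoly l)).coeff (l + 1)) = 0 := by
      apply coeff_eq_zero_of_natDegree_lt
      have := natDegree_derivative_le (Hpoly l)
      have := Hpoly_natDegree_le l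
      omega
    rw [coeff_sub, h1, h2, ih]
    ring

lemma Hpoly_ne_zero (l : ℕ) : Hpoly l ≠ 0 := fun h => by
  have := Hpoly_coeff_self l
  rw [h] at this
  simp at this
  exact (pow_ne_zero l (two_ne_zero)) this.symm

lemma Hpoly_natDegree (l : ℕ) : (Hpoly l).natDegree = l :=
  le_antisymm (Hpoly_natDegree_le l)
    (le_natDegree_of_ne_zero (by rw [Hpoly_coeff_self]; exact pow_ne_zero l two_ne_zero))

lemma Hpoly_leadingCoeff (l : ℕ) : (Hpoly l).leadingCoeff = 2 ^ l := by
  rw [leadingCoeff, Hpoly_natDegree, Hpoly_coeff_self]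

lemma entry_natDegree_le (K i : ℕ) : (Polynomial.derivative^[i] (Hpoly K)).natDegree ≤ K - i :=
  le_trans (natDegree_iterate_derivative _ _) (by have := Hpoly_natDegree K; omega)

lemma entry_coeff (K i : ℕ) (h : i ≤ K) :
    (Polynomial.derivative^[i] (Hpoly K)).coeff (K - i) = (K.descFactorial i : ℂ) * 2 ^ K := by
  rw [coeff_iterate_derivative, Nat.sub_add_cancel h, Hpoly_coeff_self]
  simp [nsmul_eq_mul]

lemma entry_ne_zero (K i : ℕ) (h : i ≤ K) : Polynomial.derivative^[i] (Hpoly K) ≠ 0 := by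
  intro h0
  have := entry_coeff K i h
  rw [h0] at this
  simp only [coeff_zero] at this
  have h1 : (K.descFactorial i : ℂ) ≠ 0 := by
    simp only [ne_eq, Nat.cast_eq_zero, Nat.descFactorial_eq_zero_iff_lt]; omega
  exact (mul_ne_zero h1 (pow_ne_zero _ two_ne_zero)) this.symm

lemma entry_natDegree (K i : ℕ) (h : i ≤ K) :
    (Polynomial.derivative^[i] (Hpoly K)).natDegree = K - i := by
  refine le_antisymm (entry_natDegree_le K i) (le_natDegree_of_ne_zero ?_)
  rw [entry_coeff K i h]
  refine mul_ne_zero ?_ (pow_ne_zero _ two_ne_zero)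
  simp only [ne_eq, Nat.cast_eq_zero, Nat.descFactorial_eq_zero_iff_lt]; omega

lemma entry_leadingCoeff (K i : ℕ) (h : i ≤ K) :
    (Polynomial.derivative^[i] (Hpoly K)).leadingCoeff = (K.descFactorial i : ℂ) * 2 ^ K := by
  rw [leadingCoeff, entry_natDegree K i h, entry_coeff K i h]

lemma Wlam_coeff (n : ℕ) (k : Fin n → ℕ) :
    (Wlam n k).coeff ((∑ j, k j) - ∑ j : Fin n, (j : ℕ)) =
      (Matrix.of fun i j : Fin n => ((k j).descFactorial (i : ℕ) : ℂ) * 2 ^ (k j)).det := by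
  classical
  set D := (∑ j, k j) - ∑ j : Fin n, (j : ℕ) with hD
  rw [Wlam, Matrix.det_apply', Matrix.det_apply', finset_sum_coeff]
  refine Finset.sum_congr rfl (fun σ _ => ?_)
  have hsign : ∀ (q : ℂ[X]), ((Equiv.Perm.sign σ : ℤ) * q : ℂ[X]).coeff D
      = (Equiv.Perm.sign σ : ℤ) * q.coeff D := by
    intro q
    rcases Int.units_eq_one_or (Equiv.Perm.sign σ) with h | h <;> simp [h]
  rw [hsign]
  congr 1
  simp only [Matrix.of_apply]
  by_cases hgood : ∀ i : Fin n, (σ i : ℕ) ≤ k i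
  · have hne : ∀ i : Fin n, i ∈ Finset.univ →
        Polynomial.derivative^[((σ i : Fin n) : ℕ)] (Hpoly (k i)) ≠ 0 :=
      fun i _ => entry_ne_zero _ _ (hgood i)
    have hdeg : (∏ i : Fin n, Polynomial.derivative^[((σ i : Fin n) : ℕ)]
        (Hpoly (k i))).natDegree = D := by
      rw [natDegree_prod _ _ hne]
      have h1 : ∑ i : Fin n, (Polynomial.derivative^[((σ i : Fin n) : ℕ)]
          (Hpoly (k i))).natDegree = ∑ i : Fin n, (k i - (σ i : ℕ)) :=
        Finset.sum_congr rfl (fun i _ => entry_natDegree _ _ (hgood i))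
      rw [h1, hD]
      have h2 : ∑ i : Fin n, ((σ i : Fin n) : ℕ) = ∑ j : Fin n, (j : ℕ) :=
        Equiv.sum_comp σ (fun j => (j : ℕ))
      have h3 : ∑ i : Fin n, (k i - (σ i : ℕ)) + ∑ i : Fin n, ((σ i : Fin n) : ℕ)
          = ∑ i : Fin n, k i := by
        rw [← Finset.sum_add_distrib]
        exact Finset.sum_congr rfl (fun i _ => by have := hgood i; omega)
      omega
    have hlead := leadingCoeff_prod (f := fun i : Fin n =>
        Polynomial.derivative^[((σ i : Fin n) : ℕ)] (Hpoly (k i))) (s := Finset.univ)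
    rw [← hdeg, coeff_natDegree, hlead]
    refine Finset.prod_congr rfl (fun i _ => ?_)
    rw [entry_leadingCoeff _ _ (hgood i)]
  · push_neg at hgood
    obtain ⟨i, hi⟩ := hgood
    have hz : Polynomial.derivative^[((σ i : Fin n) : ℕ)] (Hpoly (k i)) = 0 :=
      iterate_derivative_eq_zero (by rw [Hpoly_natDegree]; omega)
    rw [Finset.prod_eq_zero (Finset.mem_univ i) (by rw [hz]),
      Finset.prod_eq_zero (Finset.mem_univ i) (by
        have : (k i).descFactorial ((σ i : Fin n) : ℕ) = 0 :=
          Nat.descFactorial_eq_zero_iff_lt.mpr (by omega)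
        rw [this]
        simp), coeff_zero]

lemma Wlam_ne_zero (n : ℕ) (k : Fin n → ℕ) (hk : StrictAnti k) : Wlam n k ≠ 0 := by
  classical
  intro h0
  have hc := Wlam_coeff n k
  rw [h0, coeff_zero] at hc
  -- the determinant is a nonzero Vandermonde-type determinant
  have hB : (Matrix.of fun i j : Fin n => ((k j).descFactorial (i : ℕ) : ℂ) * 2 ^ (k j)) =
      (Matrix.of fun i j : Fin n => ((k j).descFactorial (i : ℕ) : ℂ)) *
        Matrix.diagonal (fun j : Fin n => (2 : ℂ) ^ (k j)) := by
    ext i j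
    rw [Matrix.mul_diagonal]
    simp
  have hBt : (Matrix.of fun i j : Fin n => ((k j).descFactorial (i : ℕ) : ℂ)).det =
      (Matrix.vandermonde (fun i : Fin n => ((k i : ℕ) : ℂ))).det := by
    rw [← Matrix.det_transpose]
    rw [Matrix.det_eval_matrixOfPolynomials_eq_det_vandermonde
      (fun i : Fin n => ((k i : ℕ) : ℂ)) (fun j : Fin n => descPochhammer ℂ (j : ℕ))
      (fun j => descPochhammer_natDegree _ _) (fun j => monic_descPochhammer _ _)]
    congr 1
    ext i j
    rw [Matrix.transpose_apply, Matrix.of_apply, Matrix.of_apply,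
      descPochhammer_eval_eq_descFactorial]
  rw [hB, Matrix.det_mul, hBt, Matrix.det_diagonal] at hc
  have hvdm : (Matrix.vandermonde (fun i : Fin n => ((k i : ℕ) : ℂ))).det ≠ 0 := by
    rw [Matrix.det_vandermonde_ne_zero_iff]
    intro a b hab
    exact hk.injective (Nat.cast_injective hab)
  exact (mul_ne_zero hvdm (Finset.prod_ne_zero_iff.mpr
    (fun j _ => pow_ne_zero _ two_ne_zero))) hc.symm

open Filter Topology

lemma analyticAt_deriv' {f : ℂ → ℂ} {z : ℂ} (hf : AnalyticAt ℂ f z) :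
    AnalyticAt ℂ (deriv f) z := by
  have h := hf.eventually_analyticAt
  have : AnalyticOnNhd ℂ f {y | AnalyticAt ℂ f y} := fun y hy => hy
  exact this.deriv z hf

/-- additivity of iterated derivatives at a point of analyticity -/
lemma iteratedDeriv_add_analyticAt {f g : ℂ → ℂ} {z : ℂ} (hf : AnalyticAt ℂ f z)
    (hg : AnalyticAt ℂ g z) (r : ℕ) :
    iteratedDeriv r (fun w => f w + g w) z = iteratedDeriv r f z + iteratedDeriv r g z := by
  induction r generalizing f g with
  | zero => simp
  | succ r ih =>
    rw [iteratedDeriv_succ', iteratedDeriv_succ', iteratedDeriv_succ']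
    have heq : deriv (fun w => f w + g w) =ᶠ[𝓝 z] fun w => deriv f w + deriv g w := by
      filter_upwards [hf.eventually_analyticAt, hg.eventually_analyticAt] with w hfw hgw
      exact deriv_add hfw.differentiableAt hgw.differentiableAt
    rw [Filter.EventuallyEq.iteratedDeriv_eq r heq]
    exact ih (analyticAt_deriv' hf) (analyticAt_deriv' hg)

lemma iteratedDeriv_const_mul_analyticAt (c : ℂ) {f : ℂ → ℂ} {z : ℂ} (hf : AnalyticAt ℂ f z)
    (r : ℕ) : iteratedDeriv r (fun w => c * f w) z = c * iteratedDeriv r f z := by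
  induction r generalizing f with
  | zero => simp
  | succ r ih =>
    rw [iteratedDeriv_succ', iteratedDeriv_succ']
    have heq : deriv (fun w => c * f w) =ᶠ[𝓝 z] fun w => c * deriv f w := by
      filter_upwards [hf.eventually_analyticAt] with w hfw
      exact deriv_const_mul c hfw.differentiableAt
    rw [Filter.EventuallyEq.iteratedDeriv_eq r heq]
    exact ih (analyticAt_deriv' hf)

/-- key vanishing lemma : `(z-z₀)^t·h` has vanishing derivatives below order `t`,
and its `t`-th derivative is `t! · h z₀`. -/
lemma iteratedDeriv_pow_mul {z₀ : ℂ} (t : ℕ) {h : ℂ → ℂ} (hh : AnalyticAt ℂ h z₀) :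
    (∀ r < t, iteratedDeriv r (fun z => (z - z₀) ^ t * h z) z₀ = 0) ∧
      iteratedDeriv t (fun z => (z - z₀) ^ t * h z) z₀ = (t.factorial : ℂ) * h z₀ := by
  induction t generalizing h with
  | zero =>
    constructor
    · intro r hr; omega
    · simp
  | succ t ih =>
    have hH : AnalyticAt ℂ (fun z => ((t : ℂ) + 1) * h z + (z - z₀) * deriv h z) z₀ :=
      (analyticAt_const.mul hh).add
        (((analyticAt_id.sub analyticAt_const)).mul (analyticAt_deriv' hh))
    have hder : deriv (fun z => (z - z₀) ^ (t + 1) * h z) =ᶠ[𝓝 z₀]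
        fun z => (z - z₀) ^ t * (((t : ℂ) + 1) * h z + (z - z₀) * deriv h z) := by
      filter_upwards [hh.eventually_analyticAt] with w hw
      have d1 : HasDerivAt (fun z : ℂ => (z - z₀) ^ (t + 1))
          (((t : ℂ) + 1) * (w - z₀) ^ t) w := by
        have := ((hasDerivAt_id w).sub_const z₀).fun_pow (t + 1)
        simpa using this
      have d2 : HasDerivAt h (deriv h w) w := hw.differentiableAt.hasDerivAt
      have := d1.mul d2
      erw [this.deriv]
      ring
    have key : ∀ r : ℕ, iteratedDeriv (r + 1) (fun z => (z - z₀) ^ (t + 1) * h z) z₀ =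
        iteratedDeriv r
          (fun z => (z - z₀) ^ t * (((t : ℂ) + 1) * h z + (z - z₀) * deriv h z)) z₀ := by
      intro r
      rw [iteratedDeriv_succ']
      exact Filter.EventuallyEq.iteratedDeriv_eq r hder
    constructor
    · intro r hr
      match r with
      | 0 => simp
      | (r' + 1) =>
        rw [key r']
        exact (ih hH).1 r' (by omega)
    · rw [key t, (ih hH).2]
      simp only [sub_self, mul_zero, add_zero, zero_mul]
      rw [Nat.factorial_succ]
      push_cast
      ring




/-- The cofactor of `W` at `z₀`. -/
noncomputable def cofac (W : Polynomial ℂ) (z₀ : ℂ) : Polynomial ℂ :=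
  W /ₘ (X - C z₀) ^ (W.rootMultiplicity z₀)

/-- The canonical analytic extension `G p = p · e^{-z²/2} / u`. -/
noncomputable def Gfun (W : Polynomial ℂ) (z₀ : ℂ) (p : Polynomial ℂ) : ℂ → ℂ :=
  fun z => eval z p * Complex.exp (-z ^ 2 / 2) / eval z (cofac W z₀)

lemma analyticAt_eval (p : Polynomial ℂ) (z : ℂ) : AnalyticAt ℂ (fun w => eval w p) z :=
  (AnalyticOnNhd.eval_polynomial (𝕜 := ℂ) p) z (Set.mem_univ z)

lemma analyticAt_gauss (z : ℂ) : AnalyticAt ℂ (fun w : ℂ => Complex.exp (-w ^ 2 / 2)) z := by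
  have h : (fun w : ℂ => -w ^ 2 / 2) = fun w : ℂ => (-(1 : ℂ) / 2) * (w * w) := by
    funext w; ring
  have h2 : AnalyticAt ℂ (fun w : ℂ => -w ^ 2 / 2) z := by
    rw [h]
    exact analyticAt_const.mul (analyticAt_id.mul analyticAt_id)
  exact h2.cexp

lemma cofac_spec (W : Polynomial ℂ) (hW : W ≠ 0) (z₀ : ℂ) :
    W = (X - C z₀) ^ (W.rootMultiplicity z₀) * cofac W z₀ ∧ eval z₀ (cofac W z₀) ≠ 0 :=
  ⟨(W.pow_mul_divByMonic_rootMultiplicity_eq z₀).symm,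
    eval_divByMonic_pow_rootMultiplicity_ne_zero z₀ hW⟩

lemma analyticAt_Gfun (W : Polynomial ℂ) (hW : W ≠ 0) (z₀ z : ℂ)
    (hz : eval z (cofac W z₀) ≠ 0) (p : Polynomial ℂ) : AnalyticAt ℂ (Gfun W z₀ p) z :=
  ((analyticAt_eval p z).mul (analyticAt_gauss z)).div (analyticAt_eval _ z) hz

/-- On the punctured neighbourhood, `G p` agrees with `(z-z₀)^m ψ`. -/
lemma Gfun_eventuallyEq (W : Polynomial ℂ) (hW : W ≠ 0) (z₀ : ℂ) (p : Polynomial ℂ) :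
    ∀ᶠ z in nhdsWithin z₀ {z₀}ᶜ, Gfun W z₀ p z =
      (z - z₀) ^ (W.rootMultiplicity z₀) *
        (eval z p * Complex.exp (-z ^ 2 / 2) / eval z W) := by
  obtain ⟨hWu, hu0⟩ := cofac_spec W hW z₀
  have hcont : ∀ᶠ z in 𝓝 z₀, eval z (cofac W z₀) ≠ 0 := by
    have : ContinuousAt (fun z => eval z (cofac W z₀)) z₀ :=
      (analyticAt_eval _ z₀).continuousAt
    exact this.eventually_ne hu0
  filter_upwards [eventually_nhdsWithin_of_eventually_nhds hcont,
    self_mem_nhdsWithin] with z hu hz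
  have hzz : z - z₀ ≠ 0 := sub_ne_zero.mpr hz
  have hevalW : eval z W = (z - z₀) ^ (W.rootMultiplicity z₀) * eval z (cofac W z₀) := by
    conv_lhs => rw [hWu]
    simp [eval_mul, eval_pow]
  rw [Gfun, hevalW]
  field_simp

/-- Characterization of quasi-invariance as vanishing of odd derivatives of `G p`. -/
lemma quasiInv_iff (W : Polynomial ℂ) (hW : W ≠ 0) (z₀ : ℂ) (p : Polynomial ℂ) :
    QuasiInv (fun z => eval z p * Complex.exp (-z ^ 2 / 2) / eval z W) z₀
        (W.rootMultiplicity z₀) ↔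
      ∀ j : ℕ, 1 ≤ j → j ≤ W.rootMultiplicity z₀ →
        iteratedDeriv (2 * j - 1) (Gfun W z₀ p) z₀ = 0 := by
  obtain ⟨hWu, hu0⟩ := cofac_spec W hW z₀
  have hGa : AnalyticAt ℂ (Gfun W z₀ p) z₀ := analyticAt_Gfun W hW z₀ z₀ hu0 p
  have hGe := Gfun_eventuallyEq W hW z₀ p
  constructor
  · rintro ⟨F, hFa, hFeq, hFd⟩
    have hFG : F =ᶠ[nhdsWithin z₀ {z₀}ᶜ] Gfun W z₀ p := by
      filter_upwards [hFeq, hGe] with z h1 h2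
      rw [h1, h2]
    have hval : F z₀ = Gfun W z₀ p z₀ := by
      have h1 : Filter.Tendsto F (nhdsWithin z₀ {z₀}ᶜ) (𝓝 (F z₀)) :=
        hFa.continuousAt.continuousWithinAt
      have h2 : Filter.Tendsto F (nhdsWithin z₀ {z₀}ᶜ) (𝓝 (Gfun W z₀ p z₀)) := by
        refine Filter.Tendsto.congr' hFG.symm ?_
        exact hGa.continuousAt.continuousWithinAt
      exact tendsto_nhds_unique h1 h2
    have hnhds : F =ᶠ[𝓝 z₀] Gfun W z₀ p := by
      rw [← nhdsNE_sup_pure z₀]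
      rw [Filter.EventuallyEq, Filter.eventually_sup]
      exact ⟨hFG, by simpa [Filter.EventuallyEq] using hval⟩
    intro j hj1 hj2
    rw [← Filter.EventuallyEq.iteratedDeriv_eq (2 * j - 1) hnhds]
    exact hFd j hj1 hj2
  · intro hvan
    exact ⟨Gfun W z₀ p, hGa, hGe, hvan⟩

/-- The linear functional `p ↦ (d/dz)^r (G p)(z₀)`. -/
noncomputable def Dlin (W : Polynomial ℂ) (hW : W ≠ 0) (z : ℂ) (r : ℕ) :
    Polynomial ℂ →ₗ[ℂ] ℂ where
  toFun p := iteratedDeriv r (Gfun W z p) z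
  map_add' p q := by
    have h : Gfun W z (p + q) = fun w => Gfun W z p w + Gfun W z q w := by
      funext w; simp only [Gfun, eval_add]; ring
    show iteratedDeriv r (Gfun W z (p + q)) z = _
    rw [h]
    exact iteratedDeriv_add_analyticAt
      (analyticAt_Gfun W hW z z (cofac_spec W hW z).2 p)
      (analyticAt_Gfun W hW z z (cofac_spec W hW z).2 q) r
  map_smul' c p := by
    have h : Gfun W z (c • p) = fun w => c * Gfun W z p w := by
      funext w; simp only [Gfun, eval_smul, smul_eq_mul]; ring
    show iteratedDeriv r (Gfun W z (c • p)) z = _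
    rw [h]
    simpa using iteratedDeriv_const_mul_analyticAt c
      (analyticAt_Gfun W hW z z (cofac_spec W hW z).2 p) r

lemma Dlin_apply (W : Polynomial ℂ) (hW : W ≠ 0) (z : ℂ) (r : ℕ) (p : Polynomial ℂ) :
    Dlin W hW z r p = iteratedDeriv r (Gfun W z p) z := rfl

lemma Gfun_factor (W : Polynomial ℂ) (z₀ a : ℂ) (t : ℕ) (q : Polynomial ℂ) :
    Gfun W z₀ ((X - C a) ^ t * q) = fun z => (z - a) ^ t * Gfun W z₀ q z := by
  funext z
  simp only [Gfun, eval_mul, eval_pow, eval_sub, eval_X, eval_C]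
  ring

lemma Dlin_factor_eq_zero (W : Polynomial ℂ) (hW : W ≠ 0) (a : ℂ) (t : ℕ) (q : Polynomial ℂ)
    (r : ℕ) (hr : r < t) : Dlin W hW a r ((X - C a) ^ t * q) = 0 := by
  rw [Dlin_apply, Gfun_factor]
  exact (iteratedDeriv_pow_mul t (analyticAt_Gfun W hW a a (cofac_spec W hW a).2 q)).1 r hr

lemma Dlin_factor_diag (W : Polynomial ℂ) (hW : W ≠ 0) (a : ℂ) (t : ℕ) (q : Polynomial ℂ) :
    Dlin W hW a t ((X - C a) ^ t * q) = (t.factorial : ℂ) * Gfun W a q a := by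
  rw [Dlin_apply, Gfun_factor]
  exact (iteratedDeriv_pow_mul t (analyticAt_Gfun W hW a a (cofac_spec W hW a).2 q)).2

/-- The submodule of polynomials satisfying the quasi-invariance conditions at real roots. -/
noncomputable def ARmod (W : Polynomial ℂ) (hW : W ≠ 0) : Submodule ℂ (Polynomial ℂ) where
  carrier := {p | ∀ z : ℂ, z.im = 0 → eval z W = 0 → ∀ j : ℕ, 1 ≤ j →
    j ≤ W.rootMultiplicity z → Dlin W hW z (2 * j - 1) p = 0}
  zero_mem' := by
    intro z _ _ j _ _
    simp
  add_mem' := by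
    intro p q hp hq z h0 h1 j hj1 hj2
    rw [map_add, hp z h0 h1 j hj1 hj2, hq z h0 h1 j hj1 hj2, add_zero]
  smul_mem' := by
    intro c p hp z h0 h1 j hj1 hj2
    rw [map_smul, hp z h0 h1 j hj1 hj2, smul_zero]

/-- The submodule of polynomials satisfying the quasi-invariance conditions at all roots. -/
noncomputable def AAmod (W : Polynomial ℂ) (hW : W ≠ 0) : Submodule ℂ (Polynomial ℂ) where
  carrier := {p | ∀ z : ℂ, eval z W = 0 → ∀ j : ℕ, 1 ≤ j →
    j ≤ W.rootMultiplicity z → Dlin W hW z (2 * j - 1) p = 0}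
  zero_mem' := by
    intro z _ j _ _
    simp
  add_mem' := by
    intro p q hp hq z h1 j hj1 hj2
    rw [map_add, hp z h1 j hj1 hj2, hq z h1 j hj1 hj2, add_zero]
  smul_mem' := by
    intro c p hp z h1 j hj1 hj2
    rw [map_smul, hp z h1 j hj1 hj2, smul_zero]

lemma mem_ARmod (W : Polynomial ℂ) (hW : W ≠ 0) (p : Polynomial ℂ) :
    p ∈ ARmod W hW ↔ ∀ z : ℂ, z.im = 0 → eval z W = 0 → ∀ j : ℕ, 1 ≤ j →
      j ≤ W.rootMultiplicity z → Dlin W hW z (2 * j - 1) p = 0 := Iff.rfl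

lemma mem_AAmod (W : Polynomial ℂ) (hW : W ≠ 0) (p : Polynomial ℂ) :
    p ∈ AAmod W hW ↔ ∀ z : ℂ, eval z W = 0 → ∀ j : ℕ, 1 ≤ j →
      j ≤ W.rootMultiplicity z → Dlin W hW z (2 * j - 1) p = 0 := Iff.rfl

open Classical in
lemma quotient_dim (W : Polynomial ℂ) (hW : W ≠ 0) :
    Module.finrank ℂ
        (↥(ARmod W hW) ⧸ Submodule.comap (ARmod W hW).subtype (AAmod W hW)) =
      Multiset.card (W.roots.filter fun z => z.im ≠ 0) := by
  classical
  set m : ℂ → ℕ := fun z => W.rootMultiplicity z with hm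
  set R : Finset ℂ := W.roots.toFinset with hR
  have hmemR : ∀ z : ℂ, z ∈ R ↔ eval z W = 0 := by
    intro z
    rw [hR, Multiset.mem_toFinset, mem_roots hW]
    exact Iff.rfl
  set IC : Finset ((_ : ℂ) × ℕ) :=
    (R.filter fun z => z.im ≠ 0).sigma (fun z => Finset.Icc 1 (m z)) with hIC
  set ι := {x // x ∈ IC} with hι
  set Φ : Polynomial ℂ →ₗ[ℂ] (ι → ℂ) :=
    LinearMap.pi (fun i : ι => Dlin W hW i.1.1 (2 * i.1.2 - 1)) with hΦ
  set Φ' := Φ.comp (ARmod W hW).subtype with hΦ'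
  have hmemIC : ∀ i : (_ : ℂ) × ℕ, i ∈ IC ↔
      (eval i.1 W = 0 ∧ i.1.im ≠ 0 ∧ 1 ≤ i.2 ∧ i.2 ≤ m i.1) := by
    intro i
    rw [hIC, Finset.mem_sigma, Finset.mem_filter, Finset.mem_Icc, hmemR]
    tauto
  -- identify the comap with the kernel of Φ'
  have hcomap : Submodule.comap (ARmod W hW).subtype (AAmod W hW) = LinearMap.ker Φ' := by
    ext q
    obtain ⟨p, hp⟩ := q
    simp only [Submodule.mem_comap, Submodule.coe_subtype, LinearMap.mem_ker]
    constructor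
    · intro hpa
      funext i
      have hi := (hmemIC i.1).mp i.2
      exact hpa i.1.1 hi.1 i.1.2 hi.2.2.1 hi.2.2.2
    · intro h0
      rw [mem_AAmod]
      intro z h1 j hj1 hj2
      by_cases him : z.im = 0
      · exact hp z him h1 j hj1 hj2
      · have hiIC : (⟨z, j⟩ : (_ : ℂ) × ℕ) ∈ IC := (hmemIC ⟨z, j⟩).mpr ⟨h1, him, hj1, hj2⟩
        exact congrFun h0 (⟨⟨z, j⟩, hiIC⟩ : ι)
  -- the special polynomials
  set Pp : ((_ : ℂ) × ℕ) → Polynomial ℂ := fun i =>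
    (X - C i.1) ^ (2 * i.2 - 1) * ∏ w ∈ R.erase i.1, (X - C w) ^ (2 * m w) with hPp
  have hPfact : ∀ i : (_ : ℂ) × ℕ, ∀ w ∈ R, w ≠ i.1 → ∃ q : Polynomial ℂ,
      Pp i = (X - C w) ^ (2 * m w) * q := by
    intro i w hwR hwne
    refine ⟨(X - C i.1) ^ (2 * i.2 - 1) * ∏ w' ∈ (R.erase i.1).erase w,
      (X - C w') ^ (2 * m w'), ?_⟩
    have hw' : w ∈ R.erase i.1 := Finset.mem_erase.mpr ⟨hwne, hwR⟩
    simp only [hPp]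
    rw [← Finset.mul_prod_erase (R.erase i.1) _ hw']
    ring
  -- P i is zero on all conditions at other roots, in particular it is in ARmod
  have hPoff : ∀ i : (_ : ℂ) × ℕ, i ∈ IC → ∀ w ∈ R, w ≠ i.1 → ∀ j : ℕ, 1 ≤ j →
      j ≤ m w → Dlin W hW w (2 * j - 1) (Pp i) = 0 := by
    intro i _ w hwR hwne j hj1 hj2
    obtain ⟨q, hq⟩ := hPfact i w hwR hwne
    rw [hq]
    exact Dlin_factor_eq_zero W hW w (2 * m w) q (2 * j - 1) (by omega)
  have hPAR : ∀ i : (_ : ℂ) × ℕ, i ∈ IC → Pp i ∈ ARmod W hW := by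
    intro i hi
    rw [mem_ARmod]
    intro z h0 h1 j hj1 hj2
    have hzR : z ∈ R := (hmemR z).mpr h1
    have hzne : z ≠ i.1 := by
      intro h
      have := ((hmemIC i).mp hi).2.1
      rw [← h] at this
      exact this h0
    exact hPoff i hi z hzR hzne j hj1 hj2
  -- lower-order components at the same root vanish
  have hPlow : ∀ i : (_ : ℂ) × ℕ, i ∈ IC → ∀ j : ℕ, 1 ≤ j → j < i.2 →
      Dlin W hW i.1 (2 * j - 1) (Pp i) = 0 := by
    intro i _ j hj1 hjlt
    rw [hPp]
    exact Dlin_factor_eq_zero W hW i.1 (2 * i.2 - 1) _ (2 * j - 1) (by omega)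
  -- the diagonal component is nonzero
  have hPdiag : ∀ i : (_ : ℂ) × ℕ, i ∈ IC → Dlin W hW i.1 (2 * i.2 - 1) (Pp i) ≠ 0 := by
    intro i hi
    rw [hPp, Dlin_factor_diag]
    refine mul_ne_zero (by exact_mod_cast Nat.factorial_ne_zero _) ?_
    rw [Gfun]
    refine div_ne_zero (mul_ne_zero ?_ (Complex.exp_ne_zero _)) (cofac_spec W hW i.1).2
    rw [eval_prod]
    refine Finset.prod_ne_zero_iff.mpr fun w hw => ?_
    rw [eval_pow, eval_sub, eval_X, eval_C]
    exact pow_ne_zero _ (sub_ne_zero.mpr (Finset.ne_of_mem_erase hw).symm)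
  -- basis vectors of the target
  set e : ι → (ι → ℂ) := fun i j => if j = i then (1 : ℂ) else 0 with he
  have hsum : ∀ f : ι → ℂ, f = ∑ i : ι, f i • e i := by
    intro f
    funext j
    rw [Finset.sum_apply]
    simp only [he, Pi.smul_apply, smul_eq_mul, mul_ite, mul_one, mul_zero]
    rw [Finset.sum_ite_eq Finset.univ j f]
    simp
  -- every basis vector is in the range of Φ', by downward induction
  have hweird : ∀ d : ℕ, ∀ i : ι, m i.1.1 - i.1.2 < d → e i ∈ LinearMap.range Φ' := by
    intro d
    induction d with
    | zero => intro i h; omega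
    | succ d ih =>
      intro i hd
      have hiIC := i.2
      have hic := (hmemIC i.1).mp hiIC
      set v : ι → ℂ := Φ' ⟨Pp i.1, hPAR i.1 hiIC⟩ with hv
      have hvmem : v ∈ LinearMap.range Φ' := ⟨_, rfl⟩
      have hvi : ∀ i' : ι, v i' = Dlin W hW i'.1.1 (2 * i'.1.2 - 1) (Pp i.1) := fun i' => rfl
      have hdiag : v i ≠ 0 := by rw [hvi]; exact hPdiag i.1 hiIC
      have hsupp : ∀ i' : ι, i' ≠ i → ¬(i'.1.1 = i.1.1 ∧ i.1.2 < i'.1.2) → v i' = 0 := by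
        intro i' hne hnh
        have hic' := (hmemIC i'.1).mp i'.2
        rw [hvi]
        by_cases hzz : i'.1.1 = i.1.1
        · have hjne : i'.1.2 ≠ i.1.2 := by
            intro hj
            apply hne
            apply Subtype.ext
            exact Sigma.ext hzz (by rw [hj])
          have hjlt : i'.1.2 < i.1.2 := by
            rcases lt_or_gt_of_ne hjne with h | h
            · exact h
            · exact absurd ⟨hzz, h⟩ hnh
          rw [hzz]
          exact hPlow i.1 hiIC i'.1.2 hic'.2.2.1 hjlt
        · exact hPoff i.1 hiIC i'.1.1 ((hmemR _).mpr hic'.1) hzz i'.1.2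
            hic'.2.2.1 hic'.2.2.2
      -- the set of "higher" indices
      set Shigh : Finset ι :=
        Finset.univ.filter (fun i' : ι => i'.1.1 = i.1.1 ∧ i.1.2 < i'.1.2) with hSh
      have hiS : i ∉ Shigh := by
        rw [hSh, Finset.mem_filter]
        rintro ⟨-, -, h⟩
        omega
      have hrepr : (v i) • e i = v - ∑ i' ∈ Shigh, v i' • e i' := by
        funext j
        simp only [Pi.smul_apply, Pi.sub_apply, smul_eq_mul, he, mul_ite, mul_one, mul_zero,
          Finset.sum_apply]
        rw [Finset.sum_ite_eq Shigh j v]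
        by_cases hji : j = i
        · subst hji
          rw [if_pos rfl, if_neg (by exact fun h => hiS h), sub_zero]
        · rw [if_neg hji]
          by_cases hjS : j ∈ Shigh
          · rw [if_pos hjS, sub_self]
          · rw [if_neg hjS, hsupp j hji, sub_zero]
            intro hcond
            exact hjS (by rw [hSh, Finset.mem_filter]; exact ⟨Finset.mem_univ j, hcond⟩)
      have : e i = (v i)⁻¹ • ((v i) • e i) := (inv_smul_smul₀ hdiag (e i)).symm
      rw [this, hrepr]
      refine Submodule.smul_mem _ _ (Submodule.sub_mem _ hvmem (Submodule.sum_mem _ ?_))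
      intro i' hi'
      rw [hSh, Finset.mem_filter] at hi'
      obtain ⟨-, hzz, hjlt⟩ := hi'
      refine Submodule.smul_mem _ _ (ih i' ?_)
      have h1 := ((hmemIC i'.1).mp i'.2).2.2.2
      rw [hzz] at h1 ⊢
      omega
  have hrange : LinearMap.range Φ' = ⊤ := by
    rw [eq_top_iff]
    intro f _
    rw [hsum f]
    refine Submodule.sum_mem _ fun i _ => Submodule.smul_mem _ _ ?_
    exact hweird (m i.1.1 - i.1.2 + 1) i (by omega)
  -- compute the dimension
  have hquot : Module.finrank ℂ
      (↥(ARmod W hW) ⧸ Submodule.comap (ARmod W hW).subtype (AAmod W hW)) =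
        Fintype.card ι := by
    rw [hcomap, (Φ'.quotKerEquivRange).finrank_eq, hrange, finrank_top, Module.finrank_pi]
  rw [hquot, Fintype.card_coe, hIC, Finset.card_sigma]
  have hcard : ∀ z ∈ R.filter (fun z => z.im ≠ 0), (Finset.Icc 1 (m z)).card = m z := by
    intro z _
    rw [Nat.card_Icc]
    omega
  rw [Finset.sum_congr rfl hcard]
  -- multiset count
  rw [← Multiset.toFinset_sum_count_eq (W.roots.filter fun z => z.im ≠ 0)]
  rw [Multiset.toFinset_filter]
  refine Finset.sum_congr rfl fun z hz => ?_
  rw [Finset.mem_filter] at hz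
  rw [Multiset.count_filter_of_pos (p := fun z : ℂ => z.im ≠ 0) hz.2, count_roots]

open Polynomial in
lemma QlamRSet_eq (n : ℕ) (k : Fin n → ℕ) (hW : Wlam n k ≠ 0) :
    QlamRSet n k = ↑(ARmod (Wlam n k) hW) := by
  ext p
  simp only [QlamRSet, Set.mem_setOf_eq, SetLike.mem_coe, mem_ARmod]
  constructor
  · intro h z h0 h1 j hj1 hj2
    exact (quasiInv_iff (Wlam n k) hW z p).mp (h z h0 h1) j hj1 hj2
  · intro h z₀ h0 h1
    rw [quasiInv_iff (Wlam n k) hW z₀ p]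
    intro j hj1 hj2
    exact h z₀ h0 h1 j hj1 hj2

open Polynomial in
lemma QlamSet_eq (n : ℕ) (k : Fin n → ℕ) (hW : Wlam n k ≠ 0) :
    QlamSet n k = ↑(AAmod (Wlam n k) hW) := by
  ext p
  simp only [QlamSet, Set.mem_setOf_eq, SetLike.mem_coe, mem_AAmod]
  constructor
  · intro h z h1 j hj1 hj2
    exact (quasiInv_iff (Wlam n k) hW z p).mp (h z h1) j hj1 hj2
  · intro h z₀ h1
    rw [quasiInv_iff (Wlam n k) hW z₀ p]
    intro j hj1 hj2
    exact h z₀ h1 j hj1 hj2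


open scoped Classical in
/-- the codimension of `Q_λ` in `Q_{λ,ℝ}` equals `|λ|` (the degree of `W_λ`)
minus the total multiplicity of the real zeros of `W_λ`. -/
theorem stmt_6 (n : ℕ) (k : Fin n → ℕ) (hk : StrictAnti k) :
    Module.finrank ℂ
        (↥(Submodule.span ℂ (QlamRSet n k)) ⧸
          Submodule.comap (Submodule.span ℂ (QlamRSet n k)).subtype
            (Submodule.span ℂ (QlamSet n k))) =
      (Wlam n k).natDegree - Multiset.card ((Wlam n k).roots.filter fun z => z.im = 0) := by
  classical
  have hW : Wlam n k ≠ 0 := Wlam_ne_zero n k hk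
  rw [QlamRSet_eq n k hW, QlamSet_eq n k hW, Submodule.span_eq, Submodule.span_eq,
    quotient_dim (Wlam n k) hW]
  have hdeg : (Wlam n k).natDegree = Multiset.card (Wlam n k).roots :=
    (Polynomial.splits_iff_card_roots.mp (IsAlgClosed.splits _)).symm
  have hsplit := Multiset.filter_add_not (fun z : ℂ => z.im = 0) (Wlam n k).roots
  have hcards : Multiset.card (Multiset.filter (fun z : ℂ => z.im = 0) (Wlam n k).roots) +
      Multiset.card (Multiset.filter (fun z : ℂ => z.im ≠ 0) (Wlam n k).roots) =
      Multiset.card (Wlam n k).roots := by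
    rw [← Multiset.card_add]
    congr 1
  omega
end
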